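/- Let T : ℝ₊₊^N → ℝ₊₊^N be an MSP mapping, let ‖·‖ be a monotone norm on ℝ^N, and let x* ∈ ℝ₊₊^N be the unique vector with ‖x*‖ = 1 for which T(x*) = γ x* for some γ > 0. Then for every starting point x₁ ∈ ℝ₊₊^N, the sequence (xₙ) generated by xₙ₊₁ = T(xₙ)/‖T(xₙ)‖ converges to x*. -/

import Mathlib

open MeasureTheory Filter

/-- The open positive cone in `ℝ^N`. -/
def PosCone (N : ℕ) : Set (Fin N → ℝ) := {x | ∀ i, 0 < x i}

/-- A monotonic, scalable, and positive (MSP) function on the positive cone `ℝ₊₊^N`: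
(0) it is positive on the cone, (i) monotone on the cone, (ii) scalable, and
(iii) its infimum over the cone is positive. -/
def IsMSPFun {N : ℕ} (f : (Fin N → ℝ) → ℝ) : Prop :=
  (∀ x : Fin N → ℝ, (∀ i, 0 < x i) → 0 < f x) ∧
  (∀ x y : Fin N → ℝ, (∀ i, 0 < x i) → (∀ i, 0 < y i) → x ≤ y → f x ≤ f y) ∧
  (∀ α : ℝ, 1 < α → ∀ x : Fin N → ℝ, (∀ i, 0 < x i) → f (α • x) < α * f x) ∧
  0 < sInf (f '' PosCone N)

/-- An MSP mapping: every coordinate function is an MSP function. -/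
def IsMSPMap {N : ℕ} (T : (Fin N → ℝ) → (Fin N → ℝ)) : Prop :=
  ∀ i, IsMSPFun (fun x => T x i)

/-- A monotone norm on `ℝ^N`: a genuine norm that is order-preserving on the
nonnegative cone. -/
def IsMonoNorm {N : ℕ} (nrm : (Fin N → ℝ) → ℝ) : Prop :=
  (∀ x : Fin N → ℝ, nrm x = 0 ↔ x = 0) ∧
  (∀ (a : ℝ) (x : Fin N → ℝ), nrm (a • x) = |a| * nrm x) ∧
  (∀ x y : Fin N → ℝ, nrm (x + y) ≤ nrm x + nrm y) ∧
  (∀ x y : Fin N → ℝ, (∀ i, 0 ≤ x i) → (∀ i, 0 ≤ y i) → x ≤ y → nrm x ≤ nrm y)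

section AuxLemmas

lemma msp_smul_le {N : ℕ} {f : (Fin N → ℝ) → ℝ} (hf : IsMSPFun f) {α : ℝ} (hα : 1 ≤ α)
    {x : Fin N → ℝ} (hx : ∀ i, 0 < x i) : f (α • x) ≤ α * f x := by
  rcases eq_or_lt_of_le hα with h | h
  · rw [← h, one_smul, one_mul]
  · exact (hf.2.2.1 α h x hx).le

lemma msp_smul_ge {N : ℕ} {f : (Fin N → ℝ) → ℝ} (hf : IsMSPFun f) {α : ℝ} (hα : 1 ≤ α)
    {x : Fin N → ℝ} (hx : ∀ i, 0 < x i) : f x ≤ α * f (α⁻¹ • x) := by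
  have hα0 : (0:ℝ) < α := lt_of_lt_of_le one_pos hα
  have hx' : ∀ i, 0 < (α⁻¹ • x) i := fun i => by
    have h : (α⁻¹ • x) i = α⁻¹ * x i := rfl
    rw [h]; exact mul_pos (inv_pos.2 hα0) (hx i)
  have h2 := msp_smul_le hf hα hx'
  rwa [smul_smul, mul_inv_cancel₀ (ne_of_gt hα0), one_smul] at h2

lemma msp_continuousAt {N : ℕ} {f : (Fin N → ℝ) → ℝ} (hf : IsMSPFun f)
    (hne : (Finset.univ : Finset (Fin N)).Nonempty)
    {x : Fin N → ℝ} (hx : ∀ i, 0 < x i) : ContinuousAt f x := by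
  rw [Metric.continuousAt_iff]
  intro ε hε
  have hfx : 0 < f x := hf.1 x hx
  obtain ⟨α, hαdef⟩ : ∃ α : ℝ, α = 1 + ε / (2 * f x) := ⟨_, rfl⟩
  have hα : 1 < α := by
    have h : 0 < ε / (2 * f x) := by positivity
    linarith
  have hα0 : (0:ℝ) < α := by linarith
  obtain ⟨μ, hμdef⟩ : ∃ μ : ℝ, μ = Finset.univ.inf' hne x := ⟨_, rfl⟩
  have hμ : 0 < μ := by
    rw [hμdef, Finset.lt_inf'_iff]
    exact fun i _ => hx i
  have hμle : ∀ i, μ ≤ x i := fun i => hμdef ▸ Finset.inf'_le _ (Finset.mem_univ i)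
  have hδ : 0 < μ * (α - 1) / α := div_pos (mul_pos hμ (by linarith)) hα0
  refine ⟨μ * (α - 1) / α, hδ, ?_⟩
  intro y hy
  have hyc : ∀ i, |y i - x i| < μ * (α - 1) / α := by
    intro i
    have h := (dist_pi_lt_iff hδ).1 hy i
    rwa [Real.dist_eq] at h
  have hkey : ∀ i, x i / α < y i ∧ y i < α * x i := by
    intro i
    have h2 : μ * (α - 1) / α ≤ x i * (α - 1) / α := by
      gcongr
      · exact hμle i
    have habs := abs_sub_lt_iff.1 (hyc i)
    have h3 : x i / α = x i - x i * (α - 1) / α := by field_simp; ring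
    have h4 : x i * (α - 1) / α ≤ x i * (α - 1) :=
      div_le_self (by nlinarith [hx i]) hα.le
    constructor
    · rw [h3]; linarith [habs.2]
    · nlinarith [habs.1, hx i]
  have hypos : ∀ i, 0 < y i := fun i => lt_trans (div_pos (hx i) hα0) (hkey i).1
  have hu : f y ≤ α * f x := by
    have hmem : ∀ i, 0 < (α • x) i := fun i => by
      have h : (α • x) i = α * x i := rfl
      rw [h]; exact mul_pos hα0 (hx i)
    have h1 : f y ≤ f (α • x) := hf.2.1 y (α • x) hypos hmem (fun i => (hkey i).2.le)
    exact h1.trans (msp_smul_le hf hα.le hx)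
  have hl : f x ≤ α * f y := by
    have hmem : ∀ i, 0 < (α⁻¹ • x) i := fun i => by
      have h : (α⁻¹ • x) i = α⁻¹ * x i := rfl
      rw [h]; exact mul_pos (inv_pos.2 hα0) (hx i)
    have h1 : f (α⁻¹ • x) ≤ f y := by
      apply hf.2.1 _ _ hmem hypos
      intro i
      have h : (α⁻¹ • x) i = α⁻¹ * x i := rfl
      rw [h, inv_mul_eq_div]
      exact (hkey i).1.le
    calc f x ≤ α * f (α⁻¹ • x) := msp_smul_ge hf hα.le hx
    _ ≤ α * f y := mul_le_mul_of_nonneg_left h1 hα0.le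
  rw [Real.dist_eq, abs_sub_lt_iff]
  have hfy : 0 < f y := hf.1 y hypos
  have he1 : α * f x = f x + ε / 2 := by rw [hαdef]; field_simp
  constructor
  · linarith
  · have h4 : f x / α ≤ f y := by
      rw [div_le_iff₀ hα0]; linarith
    have h5 : f x - f x / α = (α - 1) * f x / α := by field_simp
    have h6 : (α - 1) * f x / α ≤ (α - 1) * f x :=
      div_le_self (by nlinarith) hα.le
    have h7 : (α - 1) * f x = ε / 2 := by nlinarith
    linarith

variable {N : ℕ} {nrm : (Fin N → ℝ) → ℝ}

lemma mn_zero (h : IsMonoNorm nrm) : nrm 0 = 0 := (h.1 0).2 rfl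

lemma mn_nonneg (h : IsMonoNorm nrm) (x : Fin N → ℝ) : 0 ≤ nrm x := by
  have h1 := h.2.2.1 x (-x)
  have h2 : nrm (-x) = nrm x := by
    have := h.2.1 (-1) x
    simpa using this
  rw [add_neg_cancel, mn_zero h, h2] at h1
  linarith

lemma mn_pos (h : IsMonoNorm nrm) {x : Fin N → ℝ} (hx : x ≠ 0) : 0 < nrm x :=
  (mn_nonneg h x).lt_of_ne' (fun h0 => hx ((h.1 x).1 h0))

lemma mn_sum_le (h : IsMonoNorm nrm) {ι : Type*} (s : Finset ι) (g : ι → (Fin N → ℝ)) :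
    nrm (∑ i ∈ s, g i) ≤ ∑ i ∈ s, nrm (g i) := by
  classical
  induction s using Finset.induction_on with
  | empty => simp [mn_zero h]
  | insert _ _ hni ih =>
    rw [Finset.sum_insert hni, Finset.sum_insert hni]
    exact (h.2.2.1 _ _).trans (by linarith)

lemma mn_sub (h : IsMonoNorm nrm) (a b : Fin N → ℝ) : |nrm a - nrm b| ≤ nrm (a - b) := by
  have h1 : nrm a ≤ nrm b + nrm (a - b) := by
    have := h.2.2.1 b (a - b)
    simpa using this
  have h2 : nrm b ≤ nrm a + nrm (a - b) := by
    have h3 := h.2.2.1 a (b - a)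
    have h4 : nrm (b - a) = nrm (a - b) := by
      have := h.2.1 (-1) (a - b)
      simpa using this
    rw [h4] at h3
    simpa using h3
  rw [abs_sub_le_iff]
  constructor <;> linarith

lemma mn_continuous (h : IsMonoNorm nrm) : Continuous nrm := by
  rw [continuous_iff_continuousAt]
  intro z
  rw [Metric.continuousAt_iff]
  intro ε hε
  obtain ⟨C, hCdef⟩ : ∃ C : ℝ, C = ∑ i : Fin N, nrm (Pi.single i 1) := ⟨_, rfl⟩
  have hC0 : 0 ≤ C := hCdef ▸ Finset.sum_nonneg (fun i _ => mn_nonneg h _)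
  refine ⟨ε / (C + 1), by positivity, ?_⟩
  intro y hy
  have hsum : nrm (y - z) ≤ C * dist y z := by
    have hrep : y - z = ∑ i : Fin N, (y i - z i) • (Pi.single i 1 : Fin N → ℝ) := by
      funext j
      simp [Finset.sum_apply, Pi.single_apply]
    calc nrm (y - z) ≤ ∑ i : Fin N, nrm ((y i - z i) • (Pi.single i 1 : Fin N → ℝ)) := by
          rw [hrep]; exact mn_sum_le h _ _
    _ = ∑ i : Fin N, |y i - z i| * nrm (Pi.single i 1) := by
          refine Finset.sum_congr rfl (fun i _ => ?_)
          exact h.2.1 _ _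
    _ ≤ ∑ i : Fin N, dist y z * nrm (Pi.single i 1) := by
          refine Finset.sum_le_sum (fun i _ => ?_)
          refine mul_le_mul_of_nonneg_right ?_ (mn_nonneg h _)
          rw [← Real.dist_eq]
          exact dist_le_pi_dist y z i
    _ = C * dist y z := by
          rw [hCdef, Finset.sum_mul]
          exact Finset.sum_congr rfl (fun i _ => mul_comm _ _)
  calc dist (nrm y) (nrm z) = |nrm y - nrm z| := Real.dist_eq _ _
  _ ≤ nrm (y - z) := mn_sub h y z
  _ ≤ C * dist y z := hsum
  _ ≤ C * (ε / (C + 1)) := mul_le_mul_of_nonneg_left hy.le hC0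
  _ < ε := by
      rw [mul_comm, div_mul_eq_mul_div, div_lt_iff₀ (by positivity)]
      nlinarith

end AuxLemmas

noncomputable def Lf {N : ℕ} (hne : (Finset.univ : Finset (Fin N)).Nonempty)
    (xs v : Fin N → ℝ) : ℝ := Finset.univ.sup' hne (fun i => v i / xs i)

noncomputable def mf {N : ℕ} (hne : (Finset.univ : Finset (Fin N)).Nonempty)
    (xs v : Fin N → ℝ) : ℝ := Finset.univ.sup' hne (fun i => xs i / v i)

noncomputable def Phi {N : ℕ} (hne : (Finset.univ : Finset (Fin N)).Nonempty)
    (xs v : Fin N → ℝ) : ℝ := Lf hne xs v * mf hne xs v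

section PhiLemmas

variable {N : ℕ} {hne : (Finset.univ : Finset (Fin N)).Nonempty} {xs v : Fin N → ℝ}

lemma Lf_pos (hxs : ∀ i, 0 < xs i) (hv : ∀ i, 0 < v i) : 0 < Lf hne xs v := by
  obtain ⟨i0, _⟩ := hne
  exact lt_of_lt_of_le (div_pos (hv i0) (hxs i0))
    (Finset.le_sup' (fun i => v i / xs i) (Finset.mem_univ i0))

lemma mf_pos (hxs : ∀ i, 0 < xs i) (hv : ∀ i, 0 < v i) : 0 < mf hne xs v := by
  obtain ⟨i0, _⟩ := hne
  exact lt_of_lt_of_le (div_pos (hxs i0) (hv i0))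
    (Finset.le_sup' (fun i => xs i / v i) (Finset.mem_univ i0))

lemma Phi_pos (hxs : ∀ i, 0 < xs i) (hv : ∀ i, 0 < v i) : 0 < Phi hne xs v :=
  mul_pos (Lf_pos hxs hv) (mf_pos hxs hv)

lemma le_Lf (hxs : ∀ i, 0 < xs i) (i : Fin N) : v i ≤ Lf hne xs v * xs i := by
  have h := Finset.le_sup' (fun i => v i / xs i) (Finset.mem_univ i)
  exact (div_le_iff₀ (hxs i)).1 h

lemma le_mf (hv : ∀ i, 0 < v i) (i : Fin N) : xs i ≤ mf hne xs v * v i := by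
  have h := Finset.le_sup' (fun i => xs i / v i) (Finset.mem_univ i)
  exact (div_le_iff₀ (hv i)).1 h

lemma one_le_Lf {nrm : (Fin N → ℝ) → ℝ} (hnrm : IsMonoNorm nrm)
    (hxs : ∀ i, 0 < xs i) (hone : nrm xs = 1) (hv : ∀ i, 0 < v i) (hv1 : nrm v = 1) :
    1 ≤ Lf hne xs v := by
  have hL : 0 < Lf hne xs v := Lf_pos hxs hv
  have h1 : nrm v ≤ nrm (Lf hne xs v • xs) := by
    apply hnrm.2.2.2
    · exact fun i => (hv i).le
    · exact fun i => (mul_pos hL (hxs i)).le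
    · exact Pi.le_def.2 (fun i => le_Lf hxs i)
  rw [hnrm.2.1, hone, mul_one, abs_of_pos hL, hv1] at h1
  exact h1

lemma one_le_mf {nrm : (Fin N → ℝ) → ℝ} (hnrm : IsMonoNorm nrm)
    (hxs : ∀ i, 0 < xs i) (hone : nrm xs = 1) (hv : ∀ i, 0 < v i) (hv1 : nrm v = 1) :
    1 ≤ mf hne xs v := by
  have hm : 0 < mf hne xs v := mf_pos hxs hv
  have h1 : nrm xs ≤ nrm (mf hne xs v • v) := by
    apply hnrm.2.2.2
    · exact fun i => (hxs i).le
    · exact fun i => (mul_pos hm (hv i)).le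
    · exact Pi.le_def.2 (fun i => le_mf hv i)
  rw [hnrm.2.1, hone, abs_of_pos hm, hv1, mul_one] at h1
  exact h1

lemma Phi_continuousAt (hxs : ∀ i, 0 < xs i) (hv : ∀ i, 0 < v i) :
    ContinuousAt (Phi hne xs) v := by
  have h1 : ContinuousAt (Lf hne xs) v := by
    have h := ContinuousAt.finset_sup' (f := fun (i : Fin N) (w : Fin N → ℝ) => w i / xs i)
      hne (x := v) (fun i _ => ((continuous_apply i).continuousAt).div continuousAt_const (hxs i).ne')
    have heq : Finset.univ.sup' hne (fun (i : Fin N) (w : Fin N → ℝ) => w i / xs i)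
        = Lf hne xs := funext (fun w => Finset.sup'_apply hne _ w)
    rwa [heq] at h
  have h2 : ContinuousAt (mf hne xs) v := by
    have h := ContinuousAt.finset_sup' (f := fun (i : Fin N) (w : Fin N → ℝ) => xs i / w i)
      hne (x := v) (fun i _ => continuousAt_const.div ((continuous_apply i).continuousAt) (hv i).ne')
    have heq : Finset.univ.sup' hne (fun (i : Fin N) (w : Fin N → ℝ) => xs i / w i)
        = mf hne xs := funext (fun w => Finset.sup'_apply hne _ w)
    rwa [heq] at h
  exact h1.mul h2

end PhiLemmas

lemma phi_contract {N : ℕ} (hne : (Finset.univ : Finset (Fin N)).Nonempty)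
    {T : (Fin N → ℝ) → (Fin N → ℝ)} (hT : IsMSPMap T)
    {nrm : (Fin N → ℝ) → ℝ} (hnrm : IsMonoNorm nrm)
    {xs : Fin N → ℝ} (hxs : ∀ i, 0 < xs i) (hone : nrm xs = 1)
    {γ : ℝ} (hγ : 0 < γ) (hTxs : T xs = γ • xs)
    {v : Fin N → ℝ} (hv : ∀ i, 0 < v i) (hv1 : nrm v = 1) :
    Phi hne xs ((nrm (T v))⁻¹ • T v) ≤ Phi hne xs v ∧
      (v ≠ xs → Phi hne xs ((nrm (T v))⁻¹ • T v) < Phi hne xs v) := by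
  obtain ⟨l, hldef⟩ : ∃ l : ℝ, l = Lf hne xs v := ⟨_, rfl⟩
  obtain ⟨m, hmdef⟩ : ∃ m : ℝ, m = mf hne xs v := ⟨_, rfl⟩
  have hl1 : 1 ≤ l := hldef ▸ one_le_Lf hnrm hxs hone hv hv1
  have hm1 : 1 ≤ m := hmdef ▸ one_le_mf hnrm hxs hone hv hv1
  have hl0 : 0 < l := lt_of_lt_of_le one_pos hl1
  have hm0 : 0 < m := lt_of_lt_of_le one_pos hm1
  have hTxsi : ∀ i, T xs i = γ * xs i := fun i => by rw [hTxs]; rfl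
  have hTvpos : ∀ i, 0 < T v i := fun i => (hT i).1 v hv
  have hTvne : T v ≠ 0 := by
    obtain ⟨i0, _⟩ := hne
    intro h0
    exact absurd (congrFun h0 i0) (ne_of_gt (hTvpos i0))
  obtain ⟨s, hsdef⟩ : ∃ s : ℝ, s = nrm (T v) := ⟨_, rfl⟩
  have hs : 0 < s := hsdef ▸ mn_pos hnrm hTvne
  -- claims
  have hlxs : ∀ i, 0 < (l • xs) i := fun i => mul_pos hl0 (hxs i)
  have hmv : ∀ i, 0 < (m • v) i := fun i => mul_pos hm0 (hv i)
  have hvle : v ≤ l • xs := Pi.le_def.2 (fun i => hldef ▸ le_Lf hxs i)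
  have hxsle : xs ≤ m • v := Pi.le_def.2 (fun i => hmdef ▸ le_mf hv i)
  have claim1 : ∀ i, T v i ≤ l * γ * xs i := by
    intro i
    calc T v i ≤ T (l • xs) i := (hT i).2.1 v (l • xs) hv hlxs hvle
    _ ≤ l * T xs i := msp_smul_le (hT i) hl1 hxs
    _ = l * γ * xs i := by rw [hTxsi i]; ring
  have claim1s : 1 < l → ∀ i, T v i < l * γ * xs i := by
    intro hl i
    calc T v i ≤ T (l • xs) i := (hT i).2.1 v (l • xs) hv hlxs hvle
    _ < l * T xs i := (hT i).2.2.1 l hl xs hxs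
    _ = l * γ * xs i := by rw [hTxsi i]; ring
  have claim2 : ∀ i, γ * xs i ≤ m * T v i := by
    intro i
    calc γ * xs i = T xs i := (hTxsi i).symm
    _ ≤ T (m • v) i := (hT i).2.1 xs (m • v) hxs hmv hxsle
    _ ≤ m * T v i := msp_smul_le (hT i) hm1 hv
  have claim2s : 1 < m → ∀ i, γ * xs i < m * T v i := by
    intro hm i
    calc γ * xs i = T xs i := (hTxsi i).symm
    _ ≤ T (m • v) i := (hT i).2.1 xs (m • v) hxs hmv hxsle
    _ < m * T v i := (hT i).2.2.1 m hm v hv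
  -- S v
  have hSv : ∀ i, ((nrm (T v))⁻¹ • T v) i = s⁻¹ * T v i := fun i => by rw [hsdef]; rfl
  have hSvpos : ∀ i, 0 < ((nrm (T v))⁻¹ • T v) i := fun i => by
    rw [hSv i]; exact mul_pos (inv_pos.2 hs) (hTvpos i)
  -- bounds
  have boundL : Lf hne xs ((nrm (T v))⁻¹ • T v) ≤ l * γ / s := by
    apply Finset.sup'_le
    intro i _
    rw [hSv i, div_le_div_iff₀ (hxs i) hs]
    have h1 : s⁻¹ * T v i * s = T v i := by field_simp
    rw [h1]
    exact claim1 i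
  have boundLs : 1 < l → Lf hne xs ((nrm (T v))⁻¹ • T v) < l * γ / s := by
    intro hl
    unfold Lf
    rw [Finset.sup'_lt_iff]
    intro i _
    rw [hSv i, div_lt_div_iff₀ (hxs i) hs]
    have h1 : s⁻¹ * T v i * s = T v i := by field_simp
    rw [h1]
    exact claim1s hl i
  have boundm : mf hne xs ((nrm (T v))⁻¹ • T v) ≤ m * s / γ := by
    apply Finset.sup'_le
    intro i _
    rw [hSv i, div_le_div_iff₀ (mul_pos (inv_pos.2 hs) (hTvpos i)) hγ]
    have h1 : m * s * (s⁻¹ * T v i) = m * T v i * (s * s⁻¹) := by ring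
    rw [h1, mul_inv_cancel₀ hs.ne', mul_one]
    linarith [claim2 i]
  have boundms : 1 < m → mf hne xs ((nrm (T v))⁻¹ • T v) < m * s / γ := by
    intro hm
    unfold mf
    rw [Finset.sup'_lt_iff]
    intro i _
    rw [hSv i, div_lt_div_iff₀ (mul_pos (inv_pos.2 hs) (hTvpos i)) hγ]
    have h1 : m * s * (s⁻¹ * T v i) = m * T v i * (s * s⁻¹) := by ring
    rw [h1, mul_inv_cancel₀ hs.ne', mul_one]
    linarith [claim2s hm i]
  have hprod : (l * γ / s) * (m * s / γ) = l * m := by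
    field_simp
  have hLSpos : 0 < Lf hne xs ((nrm (T v))⁻¹ • T v) := Lf_pos hxs hSvpos
  have hmSpos : 0 < mf hne xs ((nrm (T v))⁻¹ • T v) := mf_pos hxs hSvpos
  have hlγs : 0 < l * γ / s := by positivity
  have hmsγ : 0 < m * s / γ := by positivity
  have hPhiv : Phi hne xs v = l * m := by rw [Phi, ← hldef, ← hmdef]
  constructor
  · calc Phi hne xs ((nrm (T v))⁻¹ • T v)
        ≤ (l * γ / s) * (m * s / γ) := mul_le_mul boundL boundm hmSpos.le hlγs.le
    _ = l * m := hprod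
    _ = Phi hne xs v := hPhiv.symm
  · intro hvne
    have hcase : 1 < l ∨ 1 < m := by
      by_contra hcon
      push_neg at hcon
      have hle : l = 1 := le_antisymm hcon.1 hl1
      have hme : m = 1 := le_antisymm hcon.2 hm1
      apply hvne
      funext i
      have h1 : v i ≤ xs i := by
        have := Pi.le_def.1 hvle i
        rw [hle] at this
        simpa using this
      have h2 : xs i ≤ v i := by
        have := Pi.le_def.1 hxsle i
        rw [hme] at this
        simpa using this
      linarith
    rw [hPhiv, ← hprod]
    rcases hcase with hl | hm
    · calc Phi hne xs ((nrm (T v))⁻¹ • T v)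
          ≤ Lf hne xs ((nrm (T v))⁻¹ • T v) * (m * s / γ) :=
            mul_le_mul_of_nonneg_left boundm hLSpos.le
      _ < (l * γ / s) * (m * s / γ) := mul_lt_mul_of_pos_right (boundLs hl) hmsγ
    · calc Phi hne xs ((nrm (T v))⁻¹ • T v)
          ≤ (l * γ / s) * mf hne xs ((nrm (T v))⁻¹ • T v) :=
            mul_le_mul_of_nonneg_right boundL hmSpos.le
      _ < (l * γ / s) * (m * s / γ) := mul_lt_mul_of_pos_left (boundms hm) hlγs

/-- Proposition 1 (convergence of the normalized fixed point iteration): if `x*` is the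
unique positive vector with `‖x*‖ = 1` that satisfies `T x* = γ • x*` for some `γ > 0`,
then for every starting point `x₁ ∈ ℝ₊₊^N` the sequence `xₙ₊₁ = T(xₙ)/‖T(xₙ)‖`
converges to `x*`. -/
theorem stmt4 {N : ℕ} (T : (Fin N → ℝ) → (Fin N → ℝ)) (hT : IsMSPMap T)
    (nrm : (Fin N → ℝ) → ℝ) (hnrm : IsMonoNorm nrm)
    (xs : Fin N → ℝ) (hxs : ∀ i, 0 < xs i) (hone : nrm xs = 1)
    (heig : ∃ γ : ℝ, 0 < γ ∧ T xs = γ • xs)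
    (huniq : ∀ x : Fin N → ℝ, (∀ i, 0 < x i) → nrm x = 1 →
      (∃ γ : ℝ, 0 < γ ∧ T x = γ • x) → x = xs) :
    ∀ x : ℕ → (Fin N → ℝ), (∀ i, 0 < x 0 i) →
      (∀ n, x (n + 1) = (nrm (T (x n)))⁻¹ • T (x n)) →
      Filter.Tendsto x Filter.atTop (nhds xs) := by

  intro x hx0 hrec
  rcases Nat.eq_zero_or_pos N with hN | hN
  · have hxeq : x = fun _ => xs := by
      funext n i
      exact absurd i.2 (by omega)
    rw [hxeq]
    exact tendsto_const_nhds
  haveI hNE : Nonempty (Fin N) := ⟨⟨0, hN⟩⟩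
  have hne : (Finset.univ : Finset (Fin N)).Nonempty := Finset.univ_nonempty
  obtain ⟨γ, hγ, hTxs⟩ := heig
  -- basic positivity facts
  have Tpos : ∀ v : Fin N → ℝ, (∀ i, 0 < v i) → ∀ i, 0 < T v i := fun v hv i => (hT i).1 v hv
  have Tne : ∀ v, (∀ i, 0 < v i) → T v ≠ 0 := by
    intro v hv h0
    obtain ⟨i0, _⟩ := hne
    exact absurd (congrFun h0 i0) (ne_of_gt (Tpos v hv i0))
  have nTpos : ∀ v, (∀ i, 0 < v i) → 0 < nrm (T v) := fun v hv => mn_pos hnrm (Tne v hv)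
  -- cone invariance and normalization
  have hxc : ∀ n, ∀ i, 0 < x n i := by
    intro n
    induction n with
    | zero => exact hx0
    | succ n ih =>
      intro i
      rw [hrec n]
      exact mul_pos (inv_pos.2 (nTpos _ ih)) (Tpos _ ih i)
  have hxn1 : ∀ n, nrm (x (n + 1)) = 1 := by
    intro n
    rw [hrec n, hnrm.2.1, abs_of_pos (inv_pos.2 (nTpos _ (hxc n))),
      inv_mul_cancel₀ (ne_of_gt (nTpos _ (hxc n)))]
  -- upper bound M
  have hδpos : ∀ i : Fin N, 0 < nrm (Pi.single i 1 : Fin N → ℝ) := by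
    intro i
    apply mn_pos hnrm
    intro h0
    have h1 := congrFun h0 i
    simp at h1
  obtain ⟨M, hMdef⟩ : ∃ M : ℝ,
      M = Finset.univ.sup' hne (fun i => (nrm (Pi.single i 1 : Fin N → ℝ))⁻¹) := ⟨_, rfl⟩
  have hMub : ∀ i, (nrm (Pi.single i 1 : Fin N → ℝ))⁻¹ ≤ M := fun i =>
    hMdef ▸ Finset.le_sup' (fun i => (nrm (Pi.single i 1 : Fin N → ℝ))⁻¹) (Finset.mem_univ i)
  have hMpos : 0 < M := lt_of_lt_of_le (inv_pos.2 (hδpos (Classical.arbitrary _))) (hMub _)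
  have hub : ∀ (v : Fin N → ℝ), (∀ i, 0 < v i) → nrm v = 1 → ∀ i, v i ≤ M := by
    intro v hv hv1 i
    have hle : (v i • (Pi.single i 1 : Fin N → ℝ)) ≤ v := by
      refine Pi.le_def.2 (fun j => ?_)
      rcases eq_or_ne j i with rfl | hji
      · simp
      · have h1 : (v i • (Pi.single i 1 : Fin N → ℝ)) j = 0 := by
          simp [Pi.single_eq_of_ne hji]
        rw [h1]
        exact (hv j).le
    have hnn : ∀ j, 0 ≤ (v i • (Pi.single i 1 : Fin N → ℝ)) j := by
      intro j
      rcases eq_or_ne j i with rfl | hji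
      · simp; exact (hv j).le
      · simp [Pi.single_eq_of_ne hji]
    have h2 : nrm (v i • (Pi.single i 1 : Fin N → ℝ)) ≤ nrm v :=
      hnrm.2.2.2 _ _ hnn (fun j => (hv j).le) hle
    rw [hnrm.2.1, abs_of_pos (hv i), hv1] at h2
    have h3 : v i ≤ (nrm (Pi.single i 1 : Fin N → ℝ))⁻¹ := by
      rw [← one_div]
      exact (le_div_iff₀ (hδpos i)).2 h2
    exact h3.trans (hMub i)
  -- lower bound c for T on the cone
  obtain ⟨c, hcdef⟩ : ∃ c : ℝ,
      c = Finset.univ.inf' hne (fun i => sInf ((fun v => T v i) '' PosCone N)) := ⟨_, rfl⟩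
  have hcpos : 0 < c := by
    rw [hcdef, Finset.lt_inf'_iff]
    exact fun i _ => (hT i).2.2.2
  have hTlb : ∀ v, (∀ i, 0 < v i) → ∀ i, c ≤ T v i := by
    intro v hv i
    refine le_trans (hcdef ▸ Finset.inf'_le _ (Finset.mem_univ i)) ?_
    apply csInf_le
    · exact ⟨0, fun y hy => by obtain ⟨w, hw, rfl⟩ := hy; exact ((hT i).1 w hw).le⟩
    · exact ⟨v, hv, rfl⟩
  -- upper bound C for nrm (T v) on normalized cone vectors
  have hMvc : ∀ i, 0 < (fun _ : Fin N => M) i := fun _ => hMpos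
  obtain ⟨C, hCdef⟩ : ∃ C : ℝ, C = nrm (T (fun _ : Fin N => M)) := ⟨_, rfl⟩
  have hCpos : 0 < C := hCdef ▸ nTpos _ hMvc
  have hTub : ∀ v, (∀ i, 0 < v i) → nrm v = 1 → nrm (T v) ≤ C := by
    intro v hv hv1
    rw [hCdef]
    refine hnrm.2.2.2 _ _ (fun i => (Tpos v hv i).le) (fun i => (Tpos _ hMvc i).le)
      (Pi.le_def.2 (fun i => ?_))
    exact (hT i).2.1 v _ hv hMvc (Pi.le_def.2 (fun j => hub v hv hv1 j))
  -- the compact box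
  have hlb : ∀ n i, c / C ≤ x (n + 2) i := by
    intro n i
    rw [hrec (n + 1)]
    have h1 : c ≤ T (x (n + 1)) i := hTlb _ (hxc (n + 1)) i
    have h2 : nrm (T (x (n + 1))) ≤ C := hTub _ (hxc (n + 1)) (hxn1 n)
    have h3 : 0 < nrm (T (x (n + 1))) := nTpos _ (hxc (n + 1))
    have h4 : ((nrm (T (x (n+1))))⁻¹ • T (x (n+1))) i = T (x (n+1)) i / nrm (T (x (n+1))) := by
      rw [div_eq_inv_mul]; rfl
    rw [h4]
    calc c / C ≤ c / nrm (T (x (n + 1))) := by gcongr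
    _ ≤ T (x (n + 1)) i / nrm (T (x (n + 1))) := by gcongr
  have hgK : ∀ n, x (n + 2) ∈ Set.Icc (fun _ : Fin N => c / C) (fun _ : Fin N => M) := by
    intro n
    constructor
    · exact Pi.le_def.2 (fun i => hlb n i)
    · exact Pi.le_def.2 (fun i => hub _ (hxc (n + 2)) (hxn1 (n + 1)) i)
  have hK : IsCompact (Set.Icc (fun _ : Fin N => c / C) (fun _ : Fin N => M)) := isCompact_Icc
  -- continuity of the normalized map
  have hScont : ∀ v : Fin N → ℝ, (∀ i, 0 < v i) →
      ContinuousAt (fun w => (nrm (T w))⁻¹ • T w) v := by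
    intro v hv
    have hTc : ContinuousAt T v := continuousAt_pi.2 (fun i => msp_continuousAt (hT i) hne hv)
    have hnc : ContinuousAt (fun w => nrm (T w)) v :=
      (mn_continuous hnrm).continuousAt.comp hTc
    exact (hnc.inv₀ (ne_of_gt (nTpos v hv))).smul hTc
  -- the Lyapunov sequence
  obtain ⟨φs, hφsdef⟩ : ∃ φs : ℕ → ℝ, φs = fun n => Phi hne xs (x (n + 1)) := ⟨_, rfl⟩
  have hanti : Antitone φs := by
    apply antitone_nat_of_succ_le
    intro n
    rw [hφsdef]
    have h1 : x (n + 2) = (nrm (T (x (n + 1))))⁻¹ • T (x (n + 1)) := hrec (n + 1)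
    show Phi hne xs (x (n + 2)) ≤ Phi hne xs (x (n + 1))
    rw [h1]
    exact (phi_contract hne hT hnrm hxs hone hγ hTxs (hxc (n + 1)) (hxn1 n)).1
  have hbdd : BddBelow (Set.range φs) := by
    refine ⟨0, fun y hy => ?_⟩
    obtain ⟨n, rfl⟩ := hy
    rw [hφsdef]
    exact (Phi_pos hxs (hxc (n + 1))).le
  obtain ⟨Λ, hΛdef⟩ : ∃ Λ : ℝ, Λ = ⨅ n, φs n := ⟨_, rfl⟩
  have hΛ : Filter.Tendsto φs Filter.atTop (nhds Λ) := hΛdef ▸ tendsto_atTop_ciInf hanti hbdd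
  -- main convergence via subsequences
  rw [← Filter.tendsto_add_atTop_iff_nat 2]
  apply Filter.tendsto_of_subseq_tendsto
  intro ns hns
  obtain ⟨z, hzK, ψ, hψ, hzt⟩ := hK.tendsto_subseq (x := fun n => x (ns n + 2)) (fun n => hgK (ns n))
  have hzc : ∀ i, 0 < z i := by
    intro i
    have h1 : (fun _ : Fin N => c / C) ≤ z := (Set.mem_Icc.1 hzK).1
    exact lt_of_lt_of_le (div_pos hcpos hCpos) (Pi.le_def.1 h1 i)
  have hidx : Filter.Tendsto (fun k => ns (ψ k)) Filter.atTop Filter.atTop :=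
    hns.comp hψ.tendsto_atTop
  -- nrm z = 1
  have hz1 : nrm z = 1 := by
    have h1 : Filter.Tendsto (fun k => nrm (x (ns (ψ k) + 2))) Filter.atTop (nhds (nrm z)) :=
      ((mn_continuous hnrm).continuousAt.tendsto).comp hzt
    have h2 : (fun k => nrm (x (ns (ψ k) + 2))) = fun _ => (1 : ℝ) :=
      funext (fun k => hxn1 (ns (ψ k) + 1))
    rw [h2] at h1
    exact (tendsto_nhds_unique h1 tendsto_const_nhds)
  -- Phi z = Λ
  have hPz : Phi hne xs z = Λ := by
    have h1 : Filter.Tendsto (fun k => Phi hne xs (x (ns (ψ k) + 2))) Filter.atTop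
        (nhds (Phi hne xs z)) := ((Phi_continuousAt hxs hzc).tendsto).comp hzt
    have h2 : Filter.Tendsto (fun k => φs (ns (ψ k) + 1)) Filter.atTop (nhds Λ) :=
      hΛ.comp (Filter.tendsto_atTop_mono (fun k => Nat.le_succ _) hidx)
    have h3 : (fun k => φs (ns (ψ k) + 1)) = fun k => Phi hne xs (x (ns (ψ k) + 2)) := by
      funext k
      rw [hφsdef]
    rw [h3] at h2
    exact tendsto_nhds_unique h1 h2
  -- Phi (S z) = Λ
  have hSzc : ∀ i, 0 < ((nrm (T z))⁻¹ • T z) i := fun i =>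
    mul_pos (inv_pos.2 (nTpos z hzc)) (Tpos z hzc i)
  have hPSz : Phi hne xs ((nrm (T z))⁻¹ • T z) = Λ := by
    have h0 : Filter.Tendsto (fun k => (nrm (T (x (ns (ψ k) + 2))))⁻¹ • T (x (ns (ψ k) + 2)))
        Filter.atTop (nhds ((nrm (T z))⁻¹ • T z)) := ((hScont z hzc).tendsto).comp hzt
    have h1 : (fun k => (nrm (T (x (ns (ψ k) + 2))))⁻¹ • T (x (ns (ψ k) + 2)))
        = fun k => x (ns (ψ k) + 3) := funext (fun k => (hrec (ns (ψ k) + 2)).symm)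
    rw [h1] at h0
    have h2 : Filter.Tendsto (fun k => Phi hne xs (x (ns (ψ k) + 3))) Filter.atTop
        (nhds (Phi hne xs ((nrm (T z))⁻¹ • T z))) :=
      ((Phi_continuousAt hxs hSzc).tendsto).comp h0
    have h3 : Filter.Tendsto (fun k => φs (ns (ψ k) + 2)) Filter.atTop (nhds Λ) :=
      hΛ.comp (Filter.tendsto_atTop_mono (fun k => by omega) hidx)
    have h4 : (fun k => φs (ns (ψ k) + 2)) = fun k => Phi hne xs (x (ns (ψ k) + 3)) := by
      funext k
      rw [hφsdef]
    rw [h4] at h3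
    exact tendsto_nhds_unique h2 h3
  -- conclude z = xs
  have hzxs : z = xs := by
    by_contra hzne
    have h1 := (phi_contract hne hT hnrm hxs hone hγ hTxs hzc hz1).2 hzne
    rw [hPz, hPSz] at h1
    exact lt_irrefl _ h1
  exact ⟨ψ, hzxs ▸ hzt⟩
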